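/- Let s > 0, N ≥ 2, and v : ℝᵈ → ℝ continuous, vanishing at infinity, with v(r) = -(N-1)/|r|^s + o(|r|^{-s}) as |r| → ∞ along an unbounded set Ω ⊆ ℝᵈ. Fix 2 ≤ K ≤ N-1 and suppose E_{K-1}(v) is attained at a configuration (r̄₁, ..., r̄_{K-1}). Then E_K(v) < E_{K-1}(v). -/

import Mathlib

open Filter Finset

/-- Classical `K`-particle energy with Riesz pair interaction `|x-y|^{-s}`
and external potential `v`. -/
noncomputable def energy (d K : ℕ) (s : ℝ)
    (v : EuclideanSpace ℝ (Fin d) → ℝ) (r : Fin K → EuclideanSpace ℝ (Fin d)) : ℝ :=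
  (∑ i : Fin K, ∑ j ∈ univ.filter (fun j => i < j), ‖r i - r j‖ ^ (-s)) +
    ∑ i : Fin K, v (r i)

/-- Classical `K`-particle ground-state energy `E_K(v)`. -/
noncomputable def EK (d K : ℕ) (s : ℝ)
    (v : EuclideanSpace ℝ (Fin d) → ℝ) : ℝ :=
  ⨅ r : Fin K → EuclideanSpace ℝ (Fin d), energy d K s v r

lemma aux_div_add (a : ℝ) : Tendsto (fun t : ℝ => t / (t + a)) atTop (nhds 1) := by
  have h0 : Tendsto (fun t : ℝ => a / (t + a)) atTop (nhds 0) :=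
    Tendsto.div_atTop tendsto_const_nhds (tendsto_atTop_add_const_right _ a tendsto_id)
  have h1 : Tendsto (fun t : ℝ => 1 - a / (t + a)) atTop (nhds (1 - 0)) :=
    tendsto_const_nhds.sub h0
  rw [sub_zero] at h1
  refine h1.congr' ?_
  filter_upwards [eventually_gt_atTop (|a| + 1)] with t ht
  have hta : t + a > 0 := by
    nlinarith [abs_nonneg a, neg_abs_le a]
  field_simp
  ring

lemma aux_div_sub (a : ℝ) : Tendsto (fun t : ℝ => t / (t - a)) atTop (nhds 1) := by
  simpa [sub_eq_add_neg] using aux_div_add (-a)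

/-- Single-term limit `‖r‖^s ‖r-c‖^{-s} → 1` as `‖r‖ → ∞`. -/
lemma aux_term (d : ℕ) (s : ℝ) (hs : 0 < s) (c : EuclideanSpace ℝ (Fin d)) :
    Tendsto (fun r : EuclideanSpace ℝ (Fin d) => ‖r‖ ^ s * ‖r - c‖ ^ (-s))
      (comap (fun r : EuclideanSpace ℝ (Fin d) => ‖r‖) atTop) (nhds 1) := by
  set F := comap (fun r : EuclideanSpace ℝ (Fin d) => ‖r‖) atTop with hF
  have hn : Tendsto (fun r : EuclideanSpace ℝ (Fin d) => ‖r‖) F atTop := tendsto_comap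
  have hev : ∀ᶠ r in F, ‖c‖ + 1 ≤ ‖r‖ := hn (eventually_ge_atTop (‖c‖ + 1))
  have hratio : Tendsto (fun r : EuclideanSpace ℝ (Fin d) => ‖r‖ / ‖r - c‖) F (nhds 1) := by
    have hlow : Tendsto (fun r : EuclideanSpace ℝ (Fin d) => ‖r‖ / (‖r‖ + ‖c‖)) F (nhds 1) :=
      (aux_div_add ‖c‖).comp hn
    have hup : Tendsto (fun r : EuclideanSpace ℝ (Fin d) => ‖r‖ / (‖r‖ - ‖c‖)) F (nhds 1) :=
      (aux_div_sub ‖c‖).comp hn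
    refine tendsto_of_tendsto_of_tendsto_of_le_of_le' hlow hup ?_ ?_
    · filter_upwards [hev] with r hr
      have h1 : 0 < ‖r - c‖ := by
        have := norm_sub_norm_le r c
        linarith [norm_nonneg c]
      have h2 : ‖r - c‖ ≤ ‖r‖ + ‖c‖ := norm_sub_le r c
      gcongr
    · filter_upwards [hev] with r hr
      have h1 : ‖r‖ - ‖c‖ ≤ ‖r - c‖ := norm_sub_norm_le r c
      have h2 : 0 < ‖r‖ - ‖c‖ := by linarith [norm_nonneg c]
      gcongr
  have hpow : Tendsto (fun r : EuclideanSpace ℝ (Fin d) => (‖r‖ / ‖r - c‖) ^ s) F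
      (nhds (1 : ℝ)) := by
    have := hratio.rpow_const (p := s) (Or.inr hs.le)
    simpa using this
  refine hpow.congr' ?_
  filter_upwards [hev] with r hr
  have h1 : 0 < ‖r - c‖ := by
    have := norm_sub_norm_le r c
    linarith [norm_nonneg c]
  rw [Real.div_rpow (norm_nonneg r) (norm_nonneg _), Real.rpow_neg (norm_nonneg _), div_eq_mul_inv]

/-- Energy of an extended configuration. -/
lemma energy_snoc (d m : ℕ) (s : ℝ) (v : EuclideanSpace ℝ (Fin d) → ℝ)
    (r : Fin m → EuclideanSpace ℝ (Fin d)) (x : EuclideanSpace ℝ (Fin d)) :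
    energy d (m+1) s v (Fin.snoc r x) =
      energy d m s v r + ((∑ i : Fin m, ‖r i - x‖ ^ (-s)) + v x) := by
  unfold energy
  simp only [Fin.sum_univ_castSucc, Fin.snoc_castSucc, Fin.snoc_last]
  have hlast : ∑ j ∈ univ.filter (fun j : Fin (m+1) => Fin.last m < j),
      ‖x - (Fin.snoc r x : Fin (m+1) → EuclideanSpace ℝ (Fin d)) j‖ ^ (-s) = 0 := by
    rw [Finset.filter_false_of_mem (fun j _ => not_lt.mpr (Fin.le_last j)), Finset.sum_empty]
  have hrow : ∀ i : Fin m, ∑ j ∈ univ.filter (fun j : Fin (m+1) => Fin.castSucc i < j),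
      ‖r i - (Fin.snoc r x : Fin (m+1) → EuclideanSpace ℝ (Fin d)) j‖ ^ (-s)
      = (∑ j ∈ univ.filter (fun j => i < j), ‖r i - r j‖ ^ (-s)) + ‖r i - x‖ ^ (-s) := by
    intro i
    rw [Finset.sum_filter, Finset.sum_filter,
      Fin.sum_univ_castSucc (f := fun j : Fin (m+1) => if Fin.castSucc i < j then
        ‖r i - (Fin.snoc r x : Fin (m+1) → EuclideanSpace ℝ (Fin d)) j‖ ^ (-s) else 0)]
    simp [Fin.castSucc_lt_castSucc_iff, Fin.castSucc_lt_last]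
  simp only [hlast, hrow, Finset.sum_add_distrib]
  ring

/-- A continuous potential vanishing at infinity is bounded. -/
lemma aux_bdd (d : ℕ) (v : EuclideanSpace ℝ (Fin d) → ℝ) (hv : Continuous v)
    (hv0 : Tendsto v (comap (fun r : EuclideanSpace ℝ (Fin d) => ‖r‖) atTop) (nhds 0)) :
    ∃ M : ℝ, 0 ≤ M ∧ ∀ x, |v x| ≤ M := by
  have h1 : ∀ᶠ x in comap (fun r : EuclideanSpace ℝ (Fin d) => ‖r‖) atTop, |v x| < 1 := by
    have := hv0 (Metric.ball_mem_nhds (0:ℝ) one_pos)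
    filter_upwards [this] with x hx
    simpa [Real.dist_eq] using hx
  rw [eventually_comap] at h1
  rw [eventually_atTop] at h1
  obtain ⟨R, hR⟩ := h1
  have hcomp : IsCompact (Metric.closedBall (0 : EuclideanSpace ℝ (Fin d)) (max R 0)) :=
    isCompact_closedBall _ _
  obtain ⟨z, hz, hmax⟩ := hcomp.exists_isMaxOn ⟨0, by simp [le_max_right]⟩
    (continuous_abs.comp hv).continuousOn
  refine ⟨max |v z| 1, by positivity, fun x => ?_⟩
  by_cases hx : ‖x‖ ≤ max R 0
  · exact le_trans (hmax (by simpa [Metric.mem_closedBall, dist_zero_right] using hx)) (le_max_left _ _)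
  · exact le_trans (hR ‖x‖ (le_of_lt (lt_of_le_of_lt (le_max_left R 0) (not_le.mp hx))) x rfl).le (le_max_right _ _)

/-- induction step, `E_K(v) < E_{K-1}(v)` for `2 ≤ K ≤ N-1`
when `E_{K-1}(v)` is attained. -/
theorem stmt8 (d N K : ℕ) (hN : 2 ≤ N) (hK : 2 ≤ K) (hKN : K ≤ N - 1)
    (s : ℝ) (hs : 0 < s)
    (v : EuclideanSpace ℝ (Fin d) → ℝ) (hv : Continuous v)
    (hv0 : Tendsto v (comap (fun r : EuclideanSpace ℝ (Fin d) => ‖r‖) atTop) (nhds 0))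
    (Ω : Set (EuclideanSpace ℝ (Fin d))) (hΩ : ¬ Bornology.IsBounded Ω)
    (hasym : Tendsto (fun r => ‖r‖ ^ s * v r)
      ((comap (fun r : EuclideanSpace ℝ (Fin d) => ‖r‖) atTop) ⊓ Filter.principal Ω)
      (nhds (-((N : ℝ) - 1))))
    (rbar : Fin (K - 1) → EuclideanSpace ℝ (Fin d))
    (hatt : energy d (K - 1) s v rbar = EK d (K - 1) s v) :
    EK d K s v < EK d (K - 1) s v := by
  obtain ⟨m, rfl⟩ : ∃ m, K = m + 1 := ⟨K - 1, (Nat.succ_pred_eq_of_pos (by omega)).symm⟩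
  simp only [Nat.add_sub_cancel] at hatt ⊢
  set F := comap (fun r : EuclideanSpace ℝ (Fin d) => ‖r‖) atTop with hFdef
  set F' := F ⊓ Filter.principal Ω with hF'def
  -- F' is nontrivial
  have hne : F'.NeBot := by
    rw [hF'def, Filter.inf_principal_neBot_iff]
    intro U hU
    rcases Filter.mem_comap.mp hU with ⟨t, ht, hsub⟩
    rcases Filter.mem_atTop_sets.mp ht with ⟨R, hRt⟩
    rw [isBounded_iff_forall_norm_le] at hΩ
    push_neg at hΩ
    obtain ⟨x, hxΩ, hx⟩ := hΩ R
    exact ⟨x, hsub (hRt _ hx.le), hxΩ⟩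
  -- the total limit
  have hsum : Tendsto (fun r : EuclideanSpace ℝ (Fin d) =>
      ∑ i : Fin m, ‖r‖ ^ s * ‖r - rbar i‖ ^ (-s)) F (nhds (m : ℝ)) := by
    have h := tendsto_finset_sum (univ : Finset (Fin m))
      (fun i _ => aux_term d s hs (rbar i))
    have h2 : (∑ _i ∈ (univ : Finset (Fin m)), (1:ℝ)) = (m : ℝ) := by simp
    rw [h2] at h
    exact h
  have htot : Tendsto (fun r : EuclideanSpace ℝ (Fin d) =>
      ‖r‖ ^ s * (v r + ∑ i : Fin m, ‖r - rbar i‖ ^ (-s))) F'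
      (nhds (-((N : ℝ) - 1) + m)) := by
    have h1 := hasym.add ((hsum.mono_left (inf_le_left)))
    refine h1.congr ?_
    intro r
    rw [mul_add, Finset.mul_sum]
  have hL : -((N : ℝ) - 1) + m < 0 := by
    have hm : (m : ℝ) + 2 ≤ N := by
      have : m + 2 ≤ N := by omega
      exact_mod_cast this
    linarith
  -- eventually the new point strictly lowers the energy
  have hevneg : ∀ᶠ r in F', v r + ∑ i : Fin m, ‖r - rbar i‖ ^ (-s) < 0 := by
    have h1 : ∀ᶠ r in F',
        ‖r‖ ^ s * (v r + ∑ i : Fin m, ‖r - rbar i‖ ^ (-s)) < 0 :=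
      htot.eventually_lt_const hL
    have h2 : ∀ᶠ r in F', (1 : ℝ) ≤ ‖r‖ := by
      have : ∀ᶠ r in F, (1 : ℝ) ≤ ‖r‖ :=
        (tendsto_comap : Tendsto _ F atTop) (eventually_ge_atTop 1)
      exact this.filter_mono inf_le_left
    filter_upwards [h1, h2] with r hr1 hr2
    have hp : 0 < ‖r‖ ^ s := Real.rpow_pos_of_pos (by linarith) s
    nlinarith
  obtain ⟨x, hx⟩ := hevneg.exists
  -- bound: v is bounded, so energies are bounded below
  obtain ⟨M, hM0, hM⟩ := aux_bdd d v hv hv0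
  have hbdd : BddBelow (Set.range (fun r : Fin (m+1) → EuclideanSpace ℝ (Fin d) =>
      energy d (m+1) s v r)) := by
    refine ⟨-((m+1 : ℕ) * M), ?_⟩
    rintro e ⟨r, rfl⟩
    show -((m+1 : ℕ) * M) ≤ energy d (m+1) s v r
    unfold energy
    have h1 : 0 ≤ ∑ i : Fin (m+1), ∑ j ∈ univ.filter (fun j => i < j), ‖r i - r j‖ ^ (-s) :=
      Finset.sum_nonneg fun i _ => Finset.sum_nonneg fun j _ => Real.rpow_nonneg (norm_nonneg _) _
    have h2 : -((m+1 : ℕ) * M) ≤ ∑ i : Fin (m+1), v (r i) := by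
      calc -((m+1 : ℕ) * M) = ∑ _i : Fin (m+1), (-M) := by
            simp [Finset.sum_const, nsmul_eq_mul]
        _ ≤ ∑ i : Fin (m+1), v (r i) :=
            Finset.sum_le_sum fun i _ => neg_le_of_abs_le (by
              simpa [abs_sub_comm, abs_neg] using hM (r i))
    linarith
  -- conclude
  have hle : EK d (m+1) s v ≤ energy d (m+1) s v (Fin.snoc rbar x) := ciInf_le hbdd _
  have heq := energy_snoc d m s v rbar x
  have hsum_eq : ∑ i : Fin m, ‖rbar i - x‖ ^ (-s) = ∑ i : Fin m, ‖x - rbar i‖ ^ (-s) := by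
    refine Finset.sum_congr rfl fun i _ => ?_
    rw [norm_sub_rev]
  calc EK d (m+1) s v ≤ energy d (m+1) s v (Fin.snoc rbar x) := hle
    _ = energy d m s v rbar + ((∑ i : Fin m, ‖rbar i - x‖ ^ (-s)) + v x) := heq
    _ < energy d m s v rbar := by
        rw [hsum_eq]
        linarith [hx]
    _ = EK d m s v := hatt
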